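/- arXiv:1412.6659 — 8 statements merged into one kernel-verified Lean document; each statement's English description precedes it below -/
import Mathlib

section
/- If E is an equivalence relation on X, then sequences (x_n) and (y_n) in X^ω satisfy both (x_n) E^inj (y_n) and (y_n) E^inj (x_n) if and only if there is a bijection f : ω → ω with x_n E y_{f(n)} for all n. -/
open Set Function

theorem sb_aux {α β : Type*} [Nonempty β] {f : α → β} {g : β → α}
    (hf : Function.Injective f) (hg : Function.Injective g) :
    ∃ h : α → β, Function.Bijective h ∧ ∀ a, h a = f a ∨ g (h a) = a := by
  classical
  set F : Set α →o Set α :=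
    { toFun := fun s => (g '' (f '' s)ᶜ)ᶜ
      monotone' := fun s t hst =>
        compl_subset_compl.mpr <| image_mono <| compl_subset_compl.mpr <| image_mono hst }
  set s : Set α := F.lfp
  have hs : (g '' (f '' s)ᶜ)ᶜ = s := F.map_lfp
  have hns : g '' (f '' s)ᶜ = sᶜ := compl_injective (by simp [hs])
  set g' := invFun g
  have g'g : LeftInverse g' g := leftInverse_invFun hg
  have hg'ns : g' '' sᶜ = (f '' s)ᶜ := by rw [← hns, g'g.image_image]
  set h : α → β := s.piecewise f g'
  have hsurj : Surjective h := by rw [← range_eq_univ, range_piecewise, hg'ns, union_compl_self]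
  have hinj : Injective h := by
    refine (injective_piecewise_iff _).2 ⟨hf.injOn, ?_, ?_⟩
    · intro x hx y hy hxy
      obtain ⟨x', _, rfl⟩ : x ∈ g '' (f '' s)ᶜ := by rwa [hns]
      obtain ⟨y', _, rfl⟩ : y ∈ g '' (f '' s)ᶜ := by rwa [hns]
      rw [g'g _, g'g _] at hxy
      rw [hxy]
    · intro x hx y hy hxy
      obtain ⟨y', hy', rfl⟩ : y ∈ g '' (f '' s)ᶜ := by rwa [hns]
      rw [g'g _] at hxy
      exact hy' ⟨x, hx, hxy⟩
  refine ⟨h, ⟨hinj, hsurj⟩, fun a => ?_⟩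
  by_cases ha : a ∈ s
  · left; exact Set.piecewise_eq_of_mem _ _ _ ha
  · right
    obtain ⟨b, _, rfl⟩ : a ∈ g '' (f '' s)ᶜ := by rwa [hns]
    simp only [h, Set.piecewise_eq_of_notMem _ _ _ ha, g'g b]

/-- For an equivalence relation `E`, `(x_n) E^inj (y_n)` and `(y_n) E^inj (x_n)`
hold simultaneously iff there is a bijection `f : ω → ω` with `x_n E y_{f(n)}`. -/
theorem stmt_6 {X : Type*} (E : X → X → Prop) (hE : Equivalence E)
    (x y : ℕ → X) :
    ((∃ f : ℕ → ℕ, Function.Injective f ∧ ∀ n, E (x n) (y (f n))) ∧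
      (∃ g : ℕ → ℕ, Function.Injective g ∧ ∀ n, E (y n) (x (g n)))) ↔
    (∃ f : ℕ → ℕ, Function.Bijective f ∧ ∀ n, E (x n) (y (f n))) := by
  constructor
  · rintro ⟨⟨f, hf, hfE⟩, ⟨g, hg, hgE⟩⟩
    obtain ⟨h, hbij, hprop⟩ := sb_aux hf hg
    refine ⟨h, hbij, fun n => ?_⟩
    rcases hprop n with heq | heq
    · rw [heq]; exact hfE n
    · have := hgE (h n); rw [heq] at this; exact hE.symm this
  · rintro ⟨f, hbij, hfE⟩
    obtain ⟨finv, hli, hri⟩ := Function.bijective_iff_has_inverse.mp hbij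
    exact ⟨⟨f, hbij.injective, hfE⟩, ⟨finv, hri.injective, fun n =>
      hE.symm (by simpa [hri n] using hfE (finv n))⟩⟩
end

section
/- For a quasi-order S on X and sequences with the derived sets I_α: for all countable ordinals α and all n ∈ I_α(a), if a_m S a_n then m ∈ I_α(a). Moreover if n ∈ I^∞(a) := ⋂_α I_α(a) then there exist infinitely many m ∈ I^∞(a) with a_n S a_m. -/
open Ordinal Cardinal Set

universe u v

noncomputable def Iset {X : Type*} (S : X → X → Prop) (a : ℕ → X) (α : Ordinal) : Set ℕ :=
  Ordinal.limitRecOn α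
    Set.univ
    (fun _ A => {n ∈ A | {m ∈ A | S (a n) (a m)}.Infinite})
    (fun o _ IH => ⋂ (β : Ordinal) (h : β < o), IH β h)

variable {X : Type u} (S : X → X → Prop) (a : ℕ → X)

lemma Iset_zero : Iset S a 0 = Set.univ := Ordinal.limitRecOn_zero _ _ _

lemma Iset_succ (α : Ordinal) :
    Iset S a (α + 1) =
      {n ∈ Iset S a α | {m ∈ Iset S a α | S (a n) (a m)}.Infinite} :=
  Ordinal.limitRecOn_succ _ _ _ _

lemma Iset_succ' (α : Ordinal) :
    Iset S a (Order.succ α) =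
      {n ∈ Iset S a α | {m ∈ Iset S a α | S (a n) (a m)}.Infinite} := by
  rw [← Ordinal.add_one_eq_succ]; exact Iset_succ S a α

lemma Iset_limit (α : Ordinal) (h : Order.IsSuccLimit α) :
    Iset S a α = ⋂ (β : Ordinal) (_ : β < α), Iset S a β := by
  rw [Iset, Ordinal.limitRecOn_limit _ _ _ _ h]
  rfl

lemma Iset_anti : ∀ β α : Ordinal, α ≤ β → Iset S a β ⊆ Iset S a α := by
  intro β
  induction β using Ordinal.limitRecOn with
  | zero => intro α hα; rw [nonpos_iff_eq_zero.mp hα]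
  | add_one β IH =>
    rw [Ordinal.add_one_eq_succ]
    intro α hα
    rcases eq_or_lt_of_le hα with h | h
    · rw [h]
    · have h' : α ≤ β := Order.lt_succ_iff.mp h
      refine subset_trans ?_ (IH α h')
      rw [Iset_succ']; exact fun n hn => hn.1
  | limit β hβ IH =>
    intro α hα
    rcases eq_or_lt_of_le hα with h | h
    · rw [h]
    · rw [Iset_limit S a β hβ]
      exact Set.iInter₂_subset α h

lemma Iset_closed (htrans : ∀ x y z, S x y → S y z → S x z) :
    ∀ α : Ordinal, ∀ n ∈ Iset S a α, ∀ m : ℕ, S (a m) (a n) → m ∈ Iset S a α := by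
  intro α
  induction α using Ordinal.limitRecOn with
  | zero => intro n _ m _; rw [Iset_zero]; trivial
  | add_one α IH =>
    rw [Ordinal.add_one_eq_succ]
    intro n hn m hm
    rw [Iset_succ'] at hn ⊢
    refine ⟨IH n hn.1 m hm, hn.2.mono ?_⟩
    intro k hk
    exact ⟨hk.1, htrans _ _ _ hm hk.2⟩
  | limit α hα IH =>
    intro n hn m hm
    rw [Iset_limit S a α hα] at hn ⊢
    simp only [Set.mem_iInter] at hn ⊢
    intro β hβ
    exact IH β hβ n (hn β hβ) m hm


lemma Iset_lift : ∀ α : Ordinal.{v}, Iset S a (Ordinal.lift.{w} α) = Iset S a α := by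
  intro α
  induction α using Ordinal.limitRecOn with
  | zero =>
    rw [Ordinal.lift_zero, Iset_zero, Iset_zero]
  | add_one α IH =>
    rw [Ordinal.add_one_eq_succ]
    rw [Ordinal.lift_succ, Iset_succ', Iset_succ', IH]
  | limit α hα IH =>
    have hl : Order.IsSuccLimit (Ordinal.lift.{w} α) := Ordinal.isSuccLimit_lift.mpr hα
    rw [Iset_limit S a _ hl, Iset_limit S a α hα]
    apply subset_antisymm
    · refine Set.subset_iInter₂ fun γ hγ => ?_
      refine subset_trans (Set.iInter₂_subset (Ordinal.lift.{w} γ) ?_) ?_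
      · exact Ordinal.lift_lt.mpr hγ
      · rw [IH γ hγ]
    · refine Set.subset_iInter₂ fun γ hγ => ?_
      obtain ⟨γ', hγ', rfl⟩ := Ordinal.lt_lift_iff.mp hγ
      refine subset_trans (Set.iInter₂_subset γ' hγ') ?_
      rw [IH γ' hγ']

lemma Iset_fix (α : Ordinal.{v}) (hst : Iset S a α = Iset S a (α + 1)) :
    ∀ β : Ordinal.{v}, α ≤ β → Iset S a β = Iset S a α := by
  intro β
  induction β using Ordinal.limitRecOn with
  | zero => intro hβ; rw [nonpos_iff_eq_zero.mp hβ]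
  | add_one β IH =>
    rw [Ordinal.add_one_eq_succ]
    intro hβ
    rcases le_or_gt α β with h | h
    · rw [Iset_succ', IH h, ← Iset_succ, ← hst]
    · have he : α = Order.succ β := le_antisymm hβ (Order.succ_le_of_lt h)
      rw [he]
  | limit β hβ IH =>
    intro hle
    rcases eq_or_lt_of_le hle with h | h
    · rw [h]
    · apply subset_antisymm
      · rw [Iset_limit S a β hβ]
        exact Set.iInter₂_subset α h
      · rw [Iset_limit S a β hβ]
        refine Set.subset_iInter₂ fun γ hγ => ?_
        rcases le_or_gt α γ with h' | h'
        · rw [IH γ hγ h']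
        · exact Iset_anti S a α γ h'.le

lemma Iset_stab_eq {α : Ordinal.{v}} {β : Ordinal.{w}}
    (hα : Iset S a α = Iset S a (α + 1)) (hβ : Iset S a β = Iset S a (β + 1)) :
    Iset S a α = Iset S a β := by
  set α' : Ordinal.{max v w} := Ordinal.lift.{w} α with hα'
  set β' : Ordinal.{max v w} := Ordinal.lift.{v} β with hβ'
  have eα : Iset S a α' = Iset S a α := Iset_lift S a α
  have eβ : Iset S a β' = Iset S a β := Iset_lift S a β
  have hstα : Iset S a α' = Iset S a (α' + 1) := by
    have : (α' + 1 : Ordinal) = Ordinal.lift.{w} (α + 1) := by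
      rw [Ordinal.add_one_eq_succ, Ordinal.add_one_eq_succ, Ordinal.lift_succ]
    rw [this, Iset_lift S a (α + 1), eα, hα]
  have hstβ : Iset S a β' = Iset S a (β' + 1) := by
    have : (β' + 1 : Ordinal) = Ordinal.lift.{v} (β + 1) := by
      rw [Ordinal.add_one_eq_succ, Ordinal.add_one_eq_succ, Ordinal.lift_succ]
    rw [this, Iset_lift S a (β + 1), eβ, hβ]
  have h1 := Iset_fix S a α' hstα (max α' β') (le_max_left _ _)
  have h2 := Iset_fix S a β' hstβ (max α' β') (le_max_right _ _)
  rw [← eα, ← eβ, ← h1, ← h2]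

lemma Iset_stab : ∃ α : Ordinal.{v}, α < (Cardinal.aleph 1).ord ∧
    Iset S a α = Iset S a (α + 1) := by
  by_contra h
  push_neg at h
  have hpick : ∀ α : Set.Iio (Cardinal.aleph 1).ord,
      ∃ n : ℕ, n ∈ Iset S a α.1 ∧ n ∉ Iset S a (α.1 + 1) := by
    rintro ⟨α, hα⟩
    have hne := h α hα
    have hsub : Iset S a (α + 1) ⊆ Iset S a α :=
      Iset_anti S a _ _ (by rw [Ordinal.add_one_eq_succ]; exact Order.le_succ α)
    rcases Set.exists_of_ssubset (ssubset_of_subset_of_ne hsub (Ne.symm hne)) with ⟨n, hn1, hn2⟩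
    exact ⟨n, hn1, hn2⟩
  choose g hg1 hg2 using hpick
  have key : ∀ α β : Set.Iio (Cardinal.aleph 1).ord, α.1 < β.1 → g α ≠ g β := by
    intro α β hlt he
    have : g β ∈ Iset S a (α.1 + 1) := by
      refine Iset_anti S a β.1 (α.1 + 1) ?_ (hg1 β)
      rw [Ordinal.add_one_eq_succ]
      exact Order.succ_le_of_lt hlt
    rw [← he] at this
    exact hg2 α this
  have hinj : Function.Injective g := by
    intro α β hab
    rcases lt_trichotomy α.1 β.1 with h' | h' | h'
    · exact absurd hab (key α β h')
    · exact Subtype.ext h'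
    · exact absurd hab.symm (key β α h')
  have hcount : Countable (Set.Iio (Cardinal.aleph 1).ord) := ⟨⟨g, hinj⟩⟩
  have hle : #(Set.Iio (Cardinal.aleph 1).ord) ≤ Cardinal.aleph0 :=
    Cardinal.mk_le_aleph0
  rw [Ordinal.mk_Iio_ordinal, Cardinal.card_ord, ← Cardinal.lift_aleph0.{v+1, v}] at hle
  exact absurd (Cardinal.lift_le.mp hle) (not_le.mpr Cardinal.aleph0_lt_aleph_one)

lemma Iset_inter_eq (γ : Ordinal.{v}) (hγ : γ < (Cardinal.aleph 1).ord)
    (h : Iset S a γ = Iset S a (γ + 1)) :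
    (⋂ (δ : Ordinal.{v}) (_ : δ < (Cardinal.aleph 1).ord), Iset S a δ) = Iset S a γ := by
  apply subset_antisymm
  · exact Set.iInter₂_subset γ hγ
  · refine Set.subset_iInter₂ fun δ hδ => ?_
    rcases le_or_gt γ δ with h' | h'
    · rw [Iset_fix S a γ h δ h']
    · exact Iset_anti S a γ δ h'.le

lemma Iset_part2 :
    ∀ n ∈ ⋂ (α : Ordinal.{v}) (_ : α < (Cardinal.aleph 1).ord), Iset S a α,
      {m ∈ ⋂ (α : Ordinal.{w}) (_ : α < (Cardinal.aleph 1).ord), Iset S a α |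
        S (a n) (a m)}.Infinite := by
  intro n hn
  obtain ⟨α, hα, hst⟩ := Iset_stab.{u, v} S a
  obtain ⟨β, hβ, hst'⟩ := Iset_stab.{u, w} S a
  have hTv := Iset_inter_eq S a α hα hst
  have hTw := Iset_inter_eq S a β hβ hst'
  have hab : Iset S a α = Iset S a β := Iset_stab_eq S a hst hst'
  rw [hTv] at hn
  have hn' : n ∈ Iset S a (α + 1) := by rw [← hst]; exact hn
  rw [Iset_succ] at hn'
  refine hn'.2.mono fun m hm => ⟨?_, hm.2⟩
  rw [hTw, ← hab]
  exact hm.1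

/-- The sets `I_α(a)` are downward closed under `S`, and every `n ∈ I^∞(a)` has
infinitely many `m ∈ I^∞(a)` with `a_n S a_m`. -/
theorem stmt_8 {X : Type*} (S : X → X → Prop)
    (hrefl : ∀ x, S x x) (htrans : ∀ x y z, S x y → S y z → S x z)
    (a : ℕ → X) :
    (∀ α : Ordinal, α < (Cardinal.aleph 1).ord →
      ∀ n ∈ Iset S a α, ∀ m : ℕ, S (a m) (a n) → m ∈ Iset S a α) ∧
    (∀ n ∈ ⋂ (α : Ordinal) (_ : α < (Cardinal.aleph 1).ord), Iset S a α,
      {m ∈ ⋂ (α : Ordinal) (_ : α < (Cardinal.aleph 1).ord), Iset S a α |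
        S (a n) (a m)}.Infinite) :=
  ⟨fun α _ => Iset_closed S a htrans α, Iset_part2 S a⟩
end

section
/- Let S be a quasi-order on X, a, b ∈ X^ω with injections f, g witnessing a S^inj b and b S^inj a. If n ∉ I^∞(a) then a_n and b_{f(n)} are E_S-equivalent (i.e., a_n S b_{f(n)} and b_{f(n)} S a_n). -/
/-- If `f, g` witness `a S^inj b` and `b S^inj a` and `n ∉ I^∞(a)`, then
`a_n` and `b_{f(n)}` are `E_S`-equivalent. -/
theorem stmt_10 {X : Type*} (S : X → X → Prop)
    (hrefl : ∀ x, S x x) (htrans : ∀ x y z, S x y → S y z → S x z)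
    (a b : ℕ → X) (f g : ℕ → ℕ)
    (hf : Function.Injective f) (hg : Function.Injective g)
    (hfw : ∀ n, S (a n) (b (f n))) (hgw : ∀ n, S (b n) (a (g n)))
    (n : ℕ)
    (hn : n ∉ ⋂ (α : Ordinal) (_ : α < (Cardinal.aleph 1).ord), Iset S a α) :
    S (a n) (b (f n)) ∧ S (b (f n)) (a n) := by
  refine ⟨hfw n, ?_⟩
  set h : ℕ → ℕ := g ∘ f with hh
  have hstep : ∀ m, S (a m) (a (h m)) := fun m => htrans _ _ _ (hfw m) (hgw (f m))
  have chainx : ∀ k x, S (a x) (a (h^[k] x)) := by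
    intro k
    induction k with
    | zero => intro x; simpa using hrefl _
    | succ k ih =>
      intro x
      rw [Function.iterate_succ_apply']
      exact htrans _ _ _ (ih x) (hstep _)
  by_cases hrep : ∃ i j, i < j ∧ h^[i] n = h^[j] n
  · obtain ⟨i, j, hij, heq⟩ := hrep
    have hinj : Function.Injective h := hg.comp hf
    have hd : j = i + (j - i) := by omega
    have heq2 : n = h^[j - i] n := by
      apply hinj.iterate i
      rw [← Function.iterate_add_apply, ← hd]
      exact heq
    have hd1 : j - i = (j - i - 1) + 1 := by omega
    have key : S (a (h n)) (a n) := by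
      have hc := chainx (j - i - 1) (h n)
      rw [← Function.iterate_succ_apply h (j - i - 1) n, Nat.succ_eq_add_one,
        show j - i - 1 + 1 = j - i from by omega, ← heq2] at hc
      exact hc
    exact htrans _ _ _ (hgw (f n)) key
  · exfalso
    push_neg at hrep
    have hdist : Function.Injective (fun i => h^[i] n) := by
      intro i j hij
      by_contra hne
      rcases Nat.lt_or_ge i j with hlt | hge
      · exact hrep i j hlt hij
      · exact hrep j i (by omega) hij.symm
    have key : ∀ α : Ordinal, ∀ i : ℕ, h^[i] n ∈ Iset S a α := by
      intro α
      induction α using Ordinal.induction with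
      | _ α IH =>
        rcases Ordinal.zero_or_succ_or_isSuccLimit α with h0 | ⟨β, hβ⟩ | hlim
        · intro i; rw [h0]; simp [Iset, Ordinal.limitRecOn_zero]
        · intro i
          have hβlt : β < α := by rw [← hβ]; exact Order.lt_succ β
          have hIH := IH β hβlt
          rw [← hβ, Iset, Ordinal.limitRecOn_succ]
          refine ⟨hIH i, ?_⟩
          apply Set.infinite_of_injective_forall_mem
            (f := fun j : ℕ => h^[i + j + 1] n)
          · intro j1 j2 hj
            have := hdist hj
            omega
          · intro j
            refine ⟨hIH (i + j + 1), ?_⟩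
            have := chainx (j + 1) (h^[i] n)
            rwa [← Function.iterate_add_apply, show j + 1 + i = i + j + 1 by omega] at this
        · intro i
          rw [Iset, Ordinal.limitRecOn_limit _ _ _ _ hlim]
          refine Set.mem_iInter₂.2 fun β hβ => ?_
          exact IH β hβ i
    have : n ∈ ⋂ (α : Ordinal) (_ : α < (Cardinal.aleph 1).ord), Iset S a α := by
      refine Set.mem_iInter₂.2 fun α _ => ?_
      simpa using key α 0
    exact hn this
end

section
/- Let S be a wqo on ω and x, y ∈ ω^ω. Let K_y = {n : the set {m : y_n S y_m} is infinite} and K_{x,y} = {n : ∃ m ∈ K_y, x_n S y_m}. Then there exists an injective function f : K_{x,y} → K_y such that x_n S y_{f(n)} for every n ∈ K_{x,y}. -/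
noncomputable def buildF (T : ℕ → Set ℕ) (n : ℕ) : ℕ :=
  sInf {m ∈ T n | ∀ k, (hk : k < n) → buildF T k ≠ m}
termination_by n
decreasing_by exact hk

theorem buildF_spec (T : ℕ → Set ℕ) (hT : ∀ n, (T n).Infinite) :
    Function.Injective (buildF T) ∧ ∀ n, buildF T n ∈ T n := by
  have hmem : ∀ n, buildF T n ∈ {m ∈ T n | ∀ k, k < n → buildF T k ≠ m} := by
    intro n
    rw [buildF]
    apply Nat.sInf_mem
    have : {m ∈ T n | ∀ k, k < n → buildF T k ≠ m} =
        T n \ (buildF T '' Set.Iio n) := by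
      ext m
      simp only [Set.mem_setOf_eq, Set.mem_diff, Set.mem_image, Set.mem_Iio, not_exists]
      tauto
    rw [this]
    exact ((hT n).diff ((Set.finite_Iio n).image _)).nonempty
  constructor
  · intro a b hab
    by_contra hne
    rcases Nat.lt_or_ge a b with h | h
    · exact (hmem b).2 a h hab
    · exact (hmem a).2 b (lt_of_le_of_ne h (Ne.symm hne)) hab.symm
  · exact fun n => (hmem n).1

/-- In any infinite set, some element's `S`-upper cone (via `y`) within the set
is infinite. -/
theorem wqo_exists_cone_infinite (S : ℕ → ℕ → Prop)
    (hrefl : ∀ x, S x x) (htrans : ∀ x y z, S x y → S y z → S x z)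
    (hwqo : ∀ z : ℕ → ℕ, ∃ i j : ℕ, i < j ∧ S (z i) (z j))
    (y : ℕ → ℕ) (A : Set ℕ) (hA : A.Infinite) :
    ∃ a ∈ A, {m ∈ A | S (y a) (y m)}.Infinite := by
  haveI : IsRefl ℕ S := ⟨hrefl⟩
  haveI : IsTrans ℕ S := ⟨htrans⟩
  haveI : IsPreorder ℕ S := { refl := hrefl, trans := htrans }
  have hpwo : (Set.univ : Set ℕ).PartiallyWellOrderedOn S := by
    intro f
    obtain ⟨i, j, hij, hS⟩ := hwqo (fun n => (f n).1)
    exact ⟨i, j, hij, hS⟩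
  set e := hA.natEmbedding
  obtain ⟨g, hg⟩ := hpwo.exists_monotone_subseq (f := fun n => y (e n))
    (fun n => Set.mem_univ _)
  refine ⟨e (g 0), (e (g 0)).2, ?_⟩
  have hsub : (fun n => (e (g n) : ℕ)) '' Set.Ici 1 ⊆ {m ∈ A | S (y (e (g 0))) (y m)} := by
    rintro _ ⟨n, hn, rfl⟩
    exact ⟨(e (g n)).2, hg 0 n (Nat.zero_le n)⟩
  refine Set.Infinite.mono hsub ?_
  apply Set.infinite_of_injective_forall_mem
    (f := fun n : ℕ => ((fun n => (e (g n) : ℕ)) (n + 1)))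
  case hi =>
    intro a b hab
    have := e.injective (Subtype.ext hab)
    exact Nat.succ_injective (g.injective this)
  case hf =>
    exact fun n => ⟨n + 1, Nat.le_add_left 1 n, rfl⟩

/-- For a wqo `S` on `ω`, there is an injection `f : K_{x,y} → K_y` with
`x_n S y_{f(n)}` for every `n ∈ K_{x,y}`. -/
theorem stmt_12 (S : ℕ → ℕ → Prop)
    (hrefl : ∀ x, S x x) (htrans : ∀ x y z, S x y → S y z → S x z)
    (hwqo : ∀ z : ℕ → ℕ, ∃ i j : ℕ, i < j ∧ S (z i) (z j))
    (x y : ℕ → ℕ) :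
    let Ky : Set ℕ := {n | {m : ℕ | S (y n) (y m)}.Infinite}
    let Kxy : Set ℕ := {n | ∃ m ∈ Ky, S (x n) (y m)}
    ∃ f : ℕ → ℕ, Set.InjOn f Kxy ∧ ∀ n ∈ Kxy, f n ∈ Ky ∧ S (x n) (y (f n)) := by
  intro Ky Kxy
  classical
  -- For each n ∈ Kxy, the set of good targets is infinite.
  have hTinf : ∀ n ∈ Kxy, {m ∈ Ky | S (x n) (y m)}.Infinite := by
    intro n hn
    obtain ⟨m0, hm0, hxm0⟩ := hn
    by_contra hni
    rw [Set.not_infinite] at hni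
    have hfin : ({m | m ∈ Ky ∧ S (x n) (y m)} : Set ℕ).Finite := hni
    have hAinf : ({m | S (y m0) (y m)} \ {m ∈ Ky | S (x n) (y m)}).Infinite :=
      hm0.diff hfin
    obtain ⟨a, ha, hconeA⟩ := wqo_exists_cone_infinite S hrefl htrans hwqo y _ hAinf
    have haKy : a ∈ Ky := by
      refine Set.Infinite.mono ?_ hconeA
      intro m hm
      exact hm.2
    exact ha.2 ⟨haKy, htrans _ _ _ hxm0 ha.1⟩
  set T : ℕ → Set ℕ := fun n =>
    if n ∈ Kxy then {m ∈ Ky | S (x n) (y m)} else Set.univ with hT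
  have hTall : ∀ n, (T n).Infinite := by
    intro n
    by_cases h : n ∈ Kxy
    · simpa [hT, h] using hTinf n h
    · simpa [hT, h] using Set.infinite_univ
  obtain ⟨hinj, hmemT⟩ := buildF_spec T hTall
  refine ⟨buildF T, hinj.injOn, fun n hn => ?_⟩
  have := hmemT n
  rw [hT] at this
  simp only [if_pos hn] at this
  exact ⟨this.1, this.2⟩
end

section
/- Let S be a wqo on ω, x, y ∈ ω^ω, K_y and K_{x,y} as above, and F_y = ω \ K_y (which is finite). Then x S^inj y if and only if there exists an injective g : ω \ K_{x,y} → F_y with x_n S y_{g(n)} for every n ∈ ω \ K_{x,y} (in particular ω \ K_{x,y} must be finite). -/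
/-- Recursive sequence: `rseq n` is an element of `I n` avoiding the finite sets
`D (rseq m)` for all `m < n`. -/
noncomputable def rseq (I : ℕ → Set ℕ) (D : ℕ → Finset ℕ)
    (hI : ∀ n, (I n).Infinite) : ℕ → ℕ
  | n =>
    ((hI n).diff (((Finset.range n).attach.biUnion
        (fun m => D (rseq I D hI m.1))).finite_toSet)).nonempty.choose
decreasing_by all_goals exact Finset.mem_range.mp m.2

theorem rseq_spec (I : ℕ → Set ℕ) (D : ℕ → Finset ℕ)
    (hI : ∀ n, (I n).Infinite) (n : ℕ) :
    rseq I D hI n ∈ I n ∧ ∀ m < n, rseq I D hI n ∉ D (rseq I D hI m) := by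
  have heq : rseq I D hI n = ((hI n).diff (((Finset.range n).attach.biUnion
      (fun m => D (rseq I D hI m.1))).finite_toSet)).nonempty.choose := by
    rw [rseq]
  have h := ((hI n).diff (((Finset.range n).attach.biUnion
      (fun m => D (rseq I D hI m.1))).finite_toSet)).nonempty.choose_spec
  rw [← heq] at h
  obtain ⟨h1, h2⟩ := h
  refine ⟨h1, fun m hm hmem => h2 ?_⟩
  simp only [Finset.coe_biUnion, Finset.mem_coe, Set.mem_iUnion]
  refine ⟨⟨m, Finset.mem_range.mpr hm⟩, Finset.mem_attach _ _, ?_⟩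
  exact hmem

/-- For a wqo `S` on `ω`: `x S^inj y` iff `ω \ K_{x,y}` is finite and there is an
injective `g : ω \ K_{x,y} → F_y` with `x_n S y_{g(n)}` on `ω \ K_{x,y}`. -/
theorem stmt_13 (S : ℕ → ℕ → Prop)
    (hrefl : ∀ x, S x x) (htrans : ∀ x y z, S x y → S y z → S x z)
    (hwqo : ∀ z : ℕ → ℕ, ∃ i j : ℕ, i < j ∧ S (z i) (z j))
    (x y : ℕ → ℕ) :
    let Ky : Set ℕ := {n | {m : ℕ | S (y n) (y m)}.Infinite}
    let Fy : Set ℕ := Kyᶜ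
    let Kxy : Set ℕ := {n | ∃ m ∈ Ky, S (x n) (y m)}
    ((∃ h : ℕ → ℕ, Function.Injective h ∧ ∀ n, S (x n) (y (h n))) ↔
      (Kxyᶜ.Finite ∧
        ∃ g : ℕ → ℕ, Set.InjOn g Kxyᶜ ∧ ∀ n ∈ Kxyᶜ, g n ∈ Fy ∧ S (x n) (y (g n)))) := by
  intro Ky Fy Kxy
  classical
  -- Fy is finite
  have hFyfin : Fy.Finite := by
    by_contra hinf
    have hinf' : Fy.Infinite := hinf
    set D : ℕ → Finset ℕ := fun k =>
      if h : {m | S (y k) (y m)}.Finite then h.toFinset else ∅ with hD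
    have hDeq : ∀ k (h : {m | S (y k) (y m)}.Finite), D k = h.toFinset := by
      intro k h
      rw [hD]
      exact dif_pos h
    set z := rseq (fun _ => Fy) D (fun _ => hinf') with hz
    have hspec := rseq_spec (fun _ => Fy) D (fun _ => hinf')
    obtain ⟨i, j, hij, hS⟩ := hwqo (fun n => y (z n))
    have hziF : z i ∈ Fy := (hspec i).1
    have hfin : {m | S (y (z i)) (y m)}.Finite := Set.not_infinite.mp hziF
    have hmemD : z j ∈ D (z i) := by
      rw [hDeq (z i) hfin]
      exact hfin.mem_toFinset.mpr hS
    exact (hspec j).2 i hij hmemD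
  constructor
  · rintro ⟨h, hinj, hS⟩
    have hmem : ∀ n ∈ Kxyᶜ, h n ∈ Fy := by
      intro n hn
      by_contra hK
      have : h n ∈ Ky := not_not.mp hK
      exact hn ⟨h n, this, hS n⟩
    have hKxyc : Kxyᶜ.Finite := by
      have hsub : Kxyᶜ ⊆ h ⁻¹' Fy := fun n hn => hmem n hn
      exact Set.Finite.subset (hFyfin.preimage hinj.injOn) hsub
    exact ⟨hKxyc, h, hinj.injOn, fun n hn => ⟨hmem n hn, hS n⟩⟩
  · rintro ⟨hfin, g, hginj, hg⟩
    set C : ℕ → Set ℕ := fun n => {m | S (x n) (y m)} with hC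
    have hCinf : ∀ n ∈ Kxy, (C n).Infinite := by
      rintro n ⟨m, hmK, hSm⟩
      have hsub : {m' | S (y m) (y m')} ⊆ C n := fun m' hm' => htrans _ _ _ hSm hm'
      exact Set.Infinite.mono hsub hmK
    set I : ℕ → Set ℕ := fun n => if n ∈ Kxy then C n \ Fy else Set.univ with hI
    have hIeq : ∀ n ∈ Kxy, I n = C n \ Fy := by
      intro n hn
      rw [hI]
      exact if_pos hn
    have hIinf : ∀ n, (I n).Infinite := by
      intro n
      by_cases hn : n ∈ Kxy
      · rw [hIeq n hn]
        exact (hCinf n hn).diff hFyfin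
      · have : I n = Set.univ := by rw [hI]; exact if_neg hn
        rw [this]
        exact Set.infinite_univ
    set z := rseq I (fun k => {k}) hIinf with hz
    have hspec := rseq_spec I (fun k => {k}) hIinf
    have hzK : ∀ n ∈ Kxy, z n ∈ C n \ Fy := by
      intro n hn
      have h1 : z n ∈ I n := (hspec n).1
      rwa [hIeq n hn] at h1
    have hzne : ∀ m n, m < n → z n ≠ z m := by
      intro m n hmn heq
      exact (hspec n).2 m hmn (Finset.mem_singleton.mpr heq)
    refine ⟨fun n => if n ∈ Kxy then z n else g n, ?_, ?_⟩
    · intro a b hab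
      by_cases ha : a ∈ Kxy <;> by_cases hb : b ∈ Kxy
      · simp only [if_pos ha, if_pos hb] at hab
        rcases lt_trichotomy a b with hlt | hlt | hlt
        · exact absurd hab.symm (hzne a b hlt)
        · exact hlt
        · exact absurd hab (hzne b a hlt)
      · simp only [if_pos ha, if_neg hb] at hab
        exact absurd ((hg b hb).1) (hab ▸ (hzK a ha).2)
      · simp only [if_neg ha, if_pos hb] at hab
        exact absurd ((hg a ha).1) (hab.symm ▸ (hzK b hb).2)
      · simp only [if_neg ha, if_neg hb] at hab
        exact hginj ha hb hab
    · intro n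
      by_cases hn : n ∈ Kxy
      · simp only [if_pos hn]
        exact (hzK n hn).1
      · simp only [if_neg hn]
        exact (hg n hn).2
end

section
/- Consider the linear order (ℚ, ≥). The relation ≥^inj on sequences of rationals is Σ¹₁-complete; in particular there is a continuous map from countable linear orders L to pairs of rational sequences (α_L, β_L) such that L is not a well-order iff α_L ≥^inj β_L. -/
/-- Embedding of the Kleene–Brouwer order on `List ℕ` into `ℚ ∩ (0,1]`. -/
def phi : List ℕ → ℚ
  | [] => 1
  | n :: s => (1 - (2:ℚ)⁻¹ ^ n) + (2:ℚ)⁻¹ ^ (n+1) * phi s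

lemma phi_pos (s : List ℕ) : 0 < phi s := by
  induction s with
  | nil => norm_num [phi]
  | cons n s ih =>
    have h1 : (2:ℚ)⁻¹ ^ n ≤ 1 := by
      apply pow_le_one₀ <;> norm_num
    have h2 : (0:ℚ) < (2:ℚ)⁻¹ ^ (n+1) := by positivity
    have h3 : (2:ℚ)⁻¹ ^ (n+1) * phi s > 0 := mul_pos h2 ih
    simp only [phi]
    nlinarith

lemma phi_le_R (n : ℕ) (s : List ℕ) : phi (n :: s) ≤ 1 - (2:ℚ)⁻¹ ^ (n+1) := by
  have h1 : phi s ≤ 1 := by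
    induction s with
    | nil => simp [phi]
    | cons m t ih =>
      have h2 : (0:ℚ) < (2:ℚ)⁻¹ ^ (m+1) := by positivity
      have h3 : (2:ℚ)⁻¹ ^ (m+1) * phi t ≤ (2:ℚ)⁻¹ ^ (m+1) * 1 := by
        apply mul_le_mul_of_nonneg_left ih (le_of_lt h2)
      have h4 : (2:ℚ)⁻¹ ^ m ≥ (2:ℚ)⁻¹ ^ (m+1) := by
        apply pow_le_pow_of_le_one <;> norm_num
      simp only [phi]; nlinarith
  have h2 : (0:ℚ) < (2:ℚ)⁻¹ ^ (n+1) := by positivity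
  have : (2:ℚ)⁻¹ ^ (n+1) * phi s ≤ (2:ℚ)⁻¹ ^ (n+1) * 1 :=
    mul_le_mul_of_nonneg_left h1 (le_of_lt h2)
  have h4 : (2:ℚ)⁻¹ ^ n = 2 * (2:ℚ)⁻¹ ^ (n+1) := by ring
  simp only [phi]; nlinarith

lemma phi_le_one (s : List ℕ) : phi s ≤ 1 := by
  cases s with
  | nil => simp [phi]
  | cons n t =>
    have := phi_le_R n t
    have : (0:ℚ) < (2:ℚ)⁻¹ ^ (n+1) := by positivity
    linarith [phi_le_R n t]

lemma phi_cons_lt_one (n : ℕ) (s : List ℕ) : phi (n :: s) < 1 := by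
  have := phi_le_R n s
  have h : (0:ℚ) < (2:ℚ)⁻¹ ^ (n+1) := by positivity
  linarith

lemma phi_head_lt {a b : ℕ} (h : a < b) (s t : List ℕ) : phi (a :: s) < phi (b :: t) := by
  have h1 : phi (a :: s) ≤ 1 - (2:ℚ)⁻¹ ^ (a+1) := phi_le_R a s
  have h2 : 1 - (2:ℚ)⁻¹ ^ b < phi (b :: t) := by
    have h3 : (0:ℚ) < (2:ℚ)⁻¹ ^ (b+1) * phi t := mul_pos (by positivity) (phi_pos t)
    simp only [phi]; linarith
  have h4 : (2:ℚ)⁻¹ ^ b ≤ (2:ℚ)⁻¹ ^ (a+1) := by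
    apply pow_le_pow_of_le_one (by norm_num) (by norm_num) h
  linarith

lemma phi_cons_lt_cons {a : ℕ} {s t : List ℕ} (h : phi s < phi t) :
    phi (a :: s) < phi (a :: t) := by
  have h2 : (0:ℚ) < (2:ℚ)⁻¹ ^ (a+1) := by positivity
  simp only [phi]; nlinarith

lemma phi_lt_of_cons_lt {a : ℕ} {s t : List ℕ} (h : phi (a :: s) < phi (a :: t)) :
    phi s < phi t := by
  by_contra hc
  push_neg at hc
  rcases eq_or_lt_of_le hc with he | hl
  · simp only [phi, he] at h; linarith
  · exact absurd (phi_cons_lt_cons hl) (by linarith)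

lemma phi_append_lt (s : List ℕ) (n : ℕ) : phi (s ++ [n]) < phi s := by
  induction s with
  | nil => exact phi_cons_lt_one n []
  | cons a t ih => exact phi_cons_lt_cons ih

lemma phi_inj : Function.Injective phi := by
  intro s t h
  induction s generalizing t with
  | nil =>
    cases t with
    | nil => rfl
    | cons b t' => exact absurd h.symm (ne_of_lt (phi_cons_lt_one b t'))
  | cons a s' ih =>
    cases t with
    | nil => exact absurd h (ne_of_lt (phi_cons_lt_one a s'))
    | cons b t' =>
      rcases lt_trichotomy a b with hab | hab | hab
      · exact absurd h (ne_of_lt (phi_head_lt hab s' t'))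
      · subst hab
        have : phi s' = phi t' := by
          by_contra hc
          rcases lt_or_gt_of_ne hc with h1 | h1
          · exact absurd h (ne_of_lt (phi_cons_lt_cons h1))
          · exact absurd h.symm (ne_of_lt (phi_cons_lt_cons h1))
        rw [ih this]
      · exact absurd h.symm (ne_of_lt (phi_head_lt hab t' s'))

/-- Orbit lemma: from an injection witnessing the matching we extract an
injective sequence along which `β` is weakly decreasing. -/
lemma orbit_lemma (β : ℕ → ℚ) (f : ℕ → ℕ) (hf : Function.Injective f)
    (h0 : β (f 0) ≤ 1) (hs : ∀ m, β (f (m+1)) ≤ β m) :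
    ∃ m : ℕ → ℕ, Function.Injective m ∧ β (m 0) ≤ 1 ∧ ∀ j, β (m (j+1)) ≤ β (m j) := by
  let m : ℕ → ℕ := fun j => Nat.rec (f 0) (fun _ prev => f (prev + 1)) j
  have hm0 : m 0 = f 0 := rfl
  have hmS : ∀ j, m (j+1) = f (m j + 1) := fun j => rfl
  refine ⟨m, ?_, by rw [hm0]; exact h0, fun j => by rw [hmS]; exact hs (m j)⟩
  intro j j' h
  induction j generalizing j' with
  | zero =>
    cases j' with
    | zero => rfl
    | succ j' =>
      rw [hm0, hmS] at h
      exact absurd (hf h) (by omega)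
  | succ j ih =>
    cases j' with
    | zero =>
      rw [hm0, hmS] at h
      exact absurd (hf h.symm) (by omega)
    | succ j' =>
      rw [hmS, hmS] at h
      have := hf h
      rw [ih (by omega : m j = m j')]

/-- Chain lemma: from an injective chain along which `β` decreases we build a
matching witness. -/
lemma chain_lemma (β : ℕ → ℚ) (i : ℕ → ℕ) (hi : Function.Injective i)
    (h0 : β (i 0) ≤ 1) (hs : ∀ n, β (i (n+1)) ≤ β (i n)) :
    ∃ f : ℕ → ℕ, Function.Injective f ∧ β (f 0) ≤ 1 ∧ ∀ m, β (f (m+1)) ≤ β m := by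
  classical
  let f : ℕ → ℕ := fun m =>
    Nat.rec (i 0) (fun m _ => if h : ∃ n, i n = m then i (Classical.choose h + 1) else m) m
  have hf0 : f 0 = i 0 := rfl
  have hfS : ∀ m, f (m+1) = if h : ∃ n, i n = m then i (Classical.choose h + 1) else m :=
    fun m => rfl
  refine ⟨f, ?_, by rw [hf0]; exact h0, ?_⟩
  · -- injectivity
    have key : ∀ m, (∃ n, f m = i (n)) ∨ (f m = m - 1 ∧ ¬ ∃ n, i n = m - 1) := by
      intro m
      cases m with
      | zero => exact Or.inl ⟨0, hf0⟩
      | succ m =>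
        rw [hfS]
        by_cases h : ∃ n, i n = m
        · rw [dif_pos h]; exact Or.inl ⟨_, rfl⟩
        · rw [dif_neg h]; exact Or.inr ⟨rfl, by simpa using h⟩
    intro a b hab
    cases a with
    | zero =>
      cases b with
      | zero => rfl
      | succ b =>
        rw [hf0, hfS] at hab
        by_cases h : ∃ n, i n = b
        · rw [dif_pos h] at hab; exact absurd (hi hab) (by omega)
        · rw [dif_neg h] at hab; exact absurd ⟨0, hab⟩ h
    | succ a =>
      cases b with
      | zero =>
        rw [hf0, hfS] at hab
        by_cases h : ∃ n, i n = a
        · rw [dif_pos h] at hab; exact absurd (hi hab.symm) (by omega)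
        · rw [dif_neg h] at hab; exact absurd ⟨0, hab.symm⟩ h
      | succ b =>
        rw [hfS, hfS] at hab
        by_cases ha : ∃ n, i n = a
        · by_cases hb : ∃ n, i n = b
          · rw [dif_pos ha, dif_pos hb] at hab
            have := hi hab
            have h1 := Classical.choose_spec ha
            have h2 := Classical.choose_spec hb
            have : Classical.choose ha = Classical.choose hb := by omega
            rw [← h1, ← h2, this]
          · rw [dif_pos ha, dif_neg hb] at hab
            exact absurd ⟨_, hab⟩ hb
        · by_cases hb : ∃ n, i n = b
          · rw [dif_neg ha, dif_pos hb] at hab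
            exact absurd ⟨_, hab.symm⟩ ha
          · rw [dif_neg ha, dif_neg hb] at hab; rw [hab]
  · intro m
    rw [hfS]
    by_cases h : ∃ n, i n = m
    · rw [dif_pos h]
      have h1 := Classical.choose_spec h
      calc β (i (Classical.choose h + 1)) ≤ β (i (Classical.choose h)) := hs _
        _ = β m := by rw [h1]
    · rw [dif_neg h]

lemma no_desc {α : Type*} {r : α → α → Prop} (h : WellFounded r) (f : ℕ → α)
    (hf : ∀ n, r (f (n+1)) (f n)) : False := by
  have key : ∀ a, ∀ f : ℕ → α, f 0 = a → (∀ n, r (f (n+1)) (f n)) → False := by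
    intro a
    induction (h.apply a) with
    | intro b _ IH =>
      intro f hf0 hfd
      exact IH (f 1) (hf0 ▸ hfd 0) (fun n => f (n+1)) rfl (fun n => hfd (n+1))
  exact key (f 0) f rfl hf

lemma step_lemma (t : ℕ → List ℕ) (hd : ∀ j, phi (t (j+1)) < phi (t j)) :
    ∃ (a : ℕ) (t' : ℕ → List ℕ),
      (∀ j, phi (t' (j+1)) < phi (t' j)) ∧ (∀ j, ∃ k, a :: t' j = t k) := by
  have hsa : StrictAnti (fun j => phi (t j)) := strictAnti_nat_of_succ_lt hd
  have hne : ∀ j, t (j+1) ≠ [] := by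
    intro j hnil
    have h1 : phi (t (j+1)) < phi (t 0) := hsa (by omega)
    rw [hnil] at h1
    have h2 : phi (t 0) ≤ 1 := phi_le_one _
    have h3 : phi ([] : List ℕ) = 1 := rfl
    linarith [h1, h2, h3.symm.le]
  have hcons : ∀ j, t (j+1) = (t (j+1)).headI :: (t (j+1)).tail := by
    intro j
    obtain ⟨b, l, hb⟩ := List.exists_cons_of_ne_nil (hne j)
    rw [hb]; rfl
  set h : ℕ → ℕ := fun j => (t (j+1)).headI with hh
  set r : ℕ → List ℕ := fun j => (t (j+1)).tail with hr
  have hanti : Antitone h := by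
    apply antitone_nat_of_succ_le
    intro j
    by_contra hc
    push_neg at hc
    have : phi (t (j+1)) < phi (t (j+2)) := by
      rw [hcons j, hcons (j+1)]
      exact phi_head_lt hc _ _
    exact absurd (hd (j+1)) (by linarith)
  obtain ⟨J, hJ⟩ : ∃ J, h J = sInf (Set.range h) :=
    Nat.sInf_mem (Set.range_nonempty h)
  have hconst : ∀ j, J ≤ j → h j = h J := by
    intro j hj
    have h1 : h j ≤ h J := hanti hj
    have h2 : h J ≤ h j := by rw [hJ]; exact Nat.sInf_le ⟨j, rfl⟩
    omega
  refine ⟨h J, fun j => r (J + j), ?_, ?_⟩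
  · intro j
    apply phi_lt_of_cons_lt (a := h J)
    have e1 : h J :: r (J + j + 1) = t (J + j + 2) := by
      rw [← hconst (J + j + 1) (by omega)]; exact (hcons (J + j + 1)).symm
    have e2 : h J :: r (J + j) = t (J + j + 1) := by
      rw [← hconst (J + j) (by omega)]; exact (hcons (J + j)).symm
    show phi (h J :: r (J + j + 1)) < phi (h J :: r (J + j))
    rw [e1, e2]
    exact hd (J + j + 1)
  · intro j
    refine ⟨J + j + 1, ?_⟩
    show h J :: r (J + j) = t (J + j + 1)
    rw [← hconst (J + j) (by omega)]
    exact (hcons (J + j)).symm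

lemma branch_of_descending (T : Set (List ℕ))
    (hT : ∀ ⦃s u : List ℕ⦄, s <+: u → u ∈ T → s ∈ T)
    (t : ℕ → List ℕ) (ht : ∀ j, t j ∈ T)
    (hd : ∀ j, phi (t (j+1)) < phi (t j)) :
    ∃ y : ℕ → ℕ, ∀ n, (List.range n).map y ∈ T := by
  classical
  let D := {u : ℕ → List ℕ // ∀ j, phi (u (j+1)) < phi (u j)}
  have hstep : ∀ x : D, ∃ (a : ℕ) (t' : ℕ → List ℕ),
      (∀ j, phi (t' (j+1)) < phi (t' j)) ∧ (∀ j, ∃ k, a :: t' j = x.1 k) :=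
    fun x => step_lemma x.1 x.2
  choose A T' hd' hm using hstep
  let step : D → D := fun x => ⟨T' x, hd' x⟩
  let chain : ℕ → D := fun n => step^[n] ⟨t, hd⟩
  let y : ℕ → ℕ := fun n => A (chain n)
  have hchainS : ∀ n, chain (n+1) = step (chain n) := fun n =>
    Function.iterate_succ_apply' step n _
  have inv : ∀ n j, ((List.range n).map y) ++ (chain n).1 j ∈ T := by
    intro n
    induction n with
    | zero => intro j; show _ ++ t j ∈ T; simpa using ht j
    | succ n ih =>
      intro j
      obtain ⟨k, hk⟩ := hm (chain n) j
      have e : (List.range (n+1)).map y ++ (chain (n+1)).1 j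
          = (List.range n).map y ++ (chain n).1 k := by
        rw [List.range_succ, List.map_append]
        rw [hchainS n]
        show (List.range n).map y ++ [y n] ++ T' (chain n) j = _
        rw [List.append_assoc, List.singleton_append]
        rw [show (y n : ℕ) = A (chain n) from rfl, hk]
      rw [e]; exact ih k
  exact ⟨y, fun n => hT (List.prefix_append _ _) (inv n 0)⟩

/-- The rationals with the discrete topology. -/
def Qdisc : Type := ℚ

instance : TopologicalSpace Qdisc := ⊥

noncomputable instance : LinearOrder Qdisc := inferInstanceAs (LinearOrder ℚ)

/-- The jump `≥^inj` of the linear order `(ℚ, ≥)` on sequences of rationals. -/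
def geInj (a b : ℕ → Qdisc) : Prop :=
  ∃ f : ℕ → ℕ, Function.Injective f ∧ ∀ n, b (f n) ≤ a n

instance : DiscreteTopology Qdisc := ⟨rfl⟩
instance : Countable Qdisc := inferInstanceAs (Countable ℚ)

/-- Prepend the value `1` to a sequence of rationals. -/
def topSeq (β : ℕ → ℚ) : ℕ → Qdisc := fun i => Nat.casesOn i (1:ℚ) β

lemma geInj_of_chain (β : ℕ → ℚ) (i : ℕ → ℕ) (hi : Function.Injective i)
    (h0 : β (i 0) ≤ 1) (hs : ∀ n, β (i (n+1)) ≤ β (i n)) :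
    geInj (topSeq β) β := by
  obtain ⟨f, hf, hf0, hfs⟩ := chain_lemma β i hi h0 hs
  refine ⟨f, hf, fun n => ?_⟩
  cases n with
  | zero => exact hf0
  | succ m => exact hfs m

lemma chain_of_geInj (β : ℕ → ℚ) (h : geInj (topSeq β) β) :
    ∃ m : ℕ → ℕ, Function.Injective m ∧ β (m 0) ≤ 1 ∧ ∀ j, β (m (j+1)) ≤ β (m j) := by
  obtain ⟨f, hf, hle⟩ := h
  exact orbit_lemma β f hf (hle 0) (fun m => hle (m+1))

/-- The tree (of finite approximations to preimages) associated to `g` and `z`. -/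
def Tset (g : (ℕ → ℕ) → ℕ → ℕ) (z : ℕ → ℕ) : Set (List ℕ) :=
  {s | ∀ k, k < s.length →
    ∃ y : ℕ → ℕ, (∀ j, j < s.length → y j = s.getD j 0) ∧ g y k = z k}

lemma Tset_congr (g : (ℕ → ℕ) → ℕ → ℕ) {z z' : ℕ → ℕ} {s : List ℕ}
    (h : ∀ k, k < s.length → z k = z' k) : s ∈ Tset g z ↔ s ∈ Tset g z' := by
  constructor <;> intro hs k hk
  · obtain ⟨y, hy1, hy2⟩ := hs k hk
    exact ⟨y, hy1, by rw [hy2, h k hk]⟩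
  · obtain ⟨y, hy1, hy2⟩ := hs k hk
    exact ⟨y, hy1, by rw [hy2, h k hk]⟩

lemma Tset_prefix (g : (ℕ → ℕ) → ℕ → ℕ) (z : ℕ → ℕ) :
    ∀ ⦃s u : List ℕ⦄, s <+: u → u ∈ Tset g z → s ∈ Tset g z := by
  intro s u hsu hu k hk
  have hlen : s.length ≤ u.length := hsu.length_le
  obtain ⟨y, hy1, hy2⟩ := hu k (lt_of_lt_of_le hk hlen)
  refine ⟨y, fun j hj => ?_, hy2⟩
  rw [hy1 j (lt_of_lt_of_le hj hlen)]
  rw [List.getD_eq_getElem _ _ (lt_of_lt_of_le hj hlen), List.getD_eq_getElem _ _ hj]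
  exact (hsu.getElem hj).symm

/-- An enumeration of all finite sequences of naturals. -/
noncomputable def dL : ℕ ≃ List ℕ := (Denumerable.eqv (List ℕ)).symm

open Classical in
/-- The second sequence of rationals associated to `g` and `z`. -/
noncomputable def bseq (g : (ℕ → ℕ) → ℕ → ℕ) (z : ℕ → ℕ) (i : ℕ) : ℚ :=
  if dL i ∈ Tset g z then phi (dL i) else 2 + i

lemma bseq_inj (g : (ℕ → ℕ) → ℕ → ℕ) (z : ℕ → ℕ) : Function.Injective (bseq g z) := by
  intro a b hab
  unfold bseq at hab
  by_cases ha : dL a ∈ Tset g z <;> by_cases hb : dL b ∈ Tset g z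
  · rw [if_pos ha, if_pos hb] at hab
    exact dL.injective (phi_inj hab)
  · rw [if_pos ha, if_neg hb] at hab
    have h1 := phi_le_one (dL a)
    have h2 : (0:ℚ) ≤ (b:ℚ) := Nat.cast_nonneg b
    linarith [hab ▸ h1]
  · rw [if_neg ha, if_pos hb] at hab
    have h1 := phi_le_one (dL b)
    have h2 : (0:ℚ) ≤ (a:ℚ) := Nat.cast_nonneg a
    linarith [hab ▸ h1]
  · rw [if_neg ha, if_neg hb] at hab
    have : (a:ℚ) = b := by linarith
    exact_mod_cast this

lemma bseq_tree_of_le_one (g : (ℕ → ℕ) → ℕ → ℕ) (z : ℕ → ℕ) (i : ℕ)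
    (h : bseq g z i ≤ 1) : dL i ∈ Tset g z ∧ bseq g z i = phi (dL i) := by
  by_cases hi : dL i ∈ Tset g z
  · exact ⟨hi, by rw [bseq, if_pos hi]⟩
  · exfalso
    rw [bseq, if_neg hi] at h
    have : (0:ℚ) ≤ (i:ℚ) := Nat.cast_nonneg i
    linarith

lemma main_iff (g : (ℕ → ℕ) → (ℕ → ℕ)) (hg : Continuous g) (z : ℕ → ℕ) :
    (∃ y, g y = z) ↔ geInj (topSeq (bseq g z)) (bseq g z) := by
  constructor
  · rintro ⟨y, hy⟩
    set pre : ℕ → List ℕ := fun n => (List.range n).map y with hpre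
    have hlen : ∀ n, (pre n).length = n := by intro n; simp [hpre]
    have hmem : ∀ n, pre n ∈ Tset g z := by
      intro n k hk
      refine ⟨y, fun j hj => ?_, congrFun hy k⟩
      rw [hlen] at hj
      rw [List.getD_eq_getElem _ _ (by rw [hlen]; exact hj)]
      simp [hpre]
    set idx : ℕ → ℕ := fun n => dL.symm (pre n) with hidx
    have hb : ∀ n, bseq g z (idx n) = phi (pre n) := by
      intro n
      show bseq g z (dL.symm (pre n)) = phi (pre n)
      rw [bseq, Equiv.apply_symm_apply, if_pos (hmem n)]
    apply geInj_of_chain _ idx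
    · intro a b hab
      have h1 : pre a = pre b := dL.symm.injective hab
      have h2 := congrArg List.length h1
      rw [hlen, hlen] at h2
      exact h2
    · rw [hb 0]
      show phi (pre 0) ≤ 1
      have : pre 0 = [] := by simp [hpre]
      rw [this]
      simp [phi]
    · intro n
      rw [hb (n+1), hb n]
      have : pre (n+1) = pre n ++ [y n] := by simp [hpre, List.range_succ]
      rw [this]
      exact le_of_lt (phi_append_lt _ _)
  · intro h
    obtain ⟨m, hm, h0, hs⟩ := chain_of_geInj _ h
    have hle : ∀ j, bseq g z (m j) ≤ 1 := by
      intro j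
      induction j with
      | zero => exact h0
      | succ j ih => exact le_trans (hs j) ih
    have htree : ∀ j, dL (m j) ∈ Tset g z ∧ bseq g z (m j) = phi (dL (m j)) :=
      fun j => bseq_tree_of_le_one g z (m j) (hle j)
    have hdesc : ∀ j, phi (dL (m (j+1))) < phi (dL (m j)) := by
      intro j
      have h1 : bseq g z (m (j+1)) < bseq g z (m j) := by
        refine lt_of_le_of_ne (hs j) (fun he => ?_)
        have := hm (bseq_inj g z he)
        omega
      rw [(htree (j+1)).2, (htree j).2] at h1
      exact h1
    obtain ⟨y, hy⟩ := branch_of_descending (Tset g z) (Tset_prefix g z)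
      (fun j => dL (m j)) (fun j => (htree j).1) hdesc
    refine ⟨y, ?_⟩
    funext k
    have hck : Continuous (fun w : ℕ → ℕ => g w k) := (continuous_apply k).comp hg
    have hU : IsOpen {w : ℕ → ℕ | g w k = g y k} := by
      have he : {w : ℕ → ℕ | g w k = g y k} = (fun w => g w k) ⁻¹' {g y k} := rfl
      rw [he]
      exact IsOpen.preimage hck (isOpen_discrete _)
    obtain ⟨I, u, hu, hsub⟩ := (isOpen_pi_iff.mp hU) y rfl
    set N := max (k+1) ((I.sup id) + 1) with hN
    have hkN : k < N := lt_of_lt_of_le (Nat.lt_succ_self k) (le_max_left _ _)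
    have hIN : ∀ iI ∈ I, iI < N := by
      intro iI hiI
      have h1 : iI ≤ I.sup id := Finset.le_sup (f := id) hiI
      have h2 : I.sup id + 1 ≤ N := le_max_right _ _
      omega
    obtain ⟨y', hy'1, hy'2⟩ := (hy N) k (by simpa using hkN)
    have hagree : ∀ j, j < N → y' j = y j := by
      intro j hj
      rw [hy'1 j (by simpa using hj), List.getD_eq_getElem _ _ (by simpa using hj)]
      simp
    have hy'U : g y' k = g y k := by
      apply hsub
      intro iI hiI
      rw [Finset.mem_coe] at hiI
      rw [hagree iI (hIN iI hiI)]
      exact (hu iI hiI).2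
    rw [← hy'U]
    exact hy'2

lemma bseq_congr (g : (ℕ → ℕ) → ℕ → ℕ) {z z' : ℕ → ℕ} (i : ℕ)
    (h : ∀ k, k < (dL i).length → z k = z' k) :
    bseq g z i = bseq g z' i := by
  rw [bseq, bseq]
  by_cases hm : dL i ∈ Tset g z
  · rw [if_pos hm, if_pos ((Tset_congr g h).mp hm)]
  · rw [if_neg hm, if_neg (fun hc => hm ((Tset_congr g h).mpr hc))]

/-- `bseq` as a map into the discrete rationals. -/
noncomputable def bseqD (g : (ℕ → ℕ) → ℕ → ℕ) (z : ℕ → ℕ) : ℕ → Qdisc :=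
  fun i => bseq g z i

lemma bseq_cont (g : (ℕ → ℕ) → ℕ → ℕ) :
    Continuous (fun z : ℕ → ℕ => bseqD g z) := by
  apply continuous_pi
  intro i
  have key : (fun z : ℕ → ℕ => bseqD g z i) =
      (fun v : Fin (dL i).length → ℕ =>
        (bseqD g (fun k => if h : k < (dL i).length then v ⟨k, h⟩ else 0) i)) ∘
      (fun z (k : Fin (dL i).length) => z (k : ℕ)) := by
    funext z
    show bseqD g z i = bseqD g _ i
    unfold bseqD
    exact bseq_congr g i (fun k hk => by simp [hk])
  rw [key]
  exact continuous_of_discreteTopology.comp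
    (continuous_pi (fun k => continuous_apply (k : ℕ)))

lemma topSeq_cont {X : Type*} [TopologicalSpace X] {b : X → ℕ → Qdisc}
    (hb : ∀ i, Continuous fun x => b x i) :
    Continuous (fun x => topSeq (b x)) := by
  apply continuous_pi
  intro i
  cases i with
  | zero => exact continuous_const
  | succ i => exact hb i

lemma part2 (B : Set (ℕ → ℕ)) (hB : MeasureTheory.AnalyticSet B) :
    ∃ F : (ℕ → ℕ) → (ℕ → Qdisc) × (ℕ → Qdisc), Continuous F ∧
      ∀ z, z ∈ B ↔ geInj (F z).1 (F z).2 := by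
  rw [MeasureTheory.AnalyticSet_def] at hB
  rcases hB with hBe | ⟨g, hg, hrange⟩
  · refine ⟨fun _ => ((fun _ => (0:ℚ) : ℕ → Qdisc), (fun _ => (1:ℚ) : ℕ → Qdisc)),
      continuous_const, ?_⟩
    intro z
    rw [hBe]
    simp only [Set.mem_empty_iff_false, false_iff]
    rintro ⟨f, hf, hle⟩
    have h2 : (1:ℚ) ≤ (0:ℚ) := hle 0
    norm_num at h2
  · refine ⟨fun z => (topSeq (bseqD g z), bseqD g z), ?_, ?_⟩
    · exact Continuous.prodMk
        (topSeq_cont (fun i => (continuous_apply i).comp (bseq_cont g)))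
        (bseq_cont g)
    · intro z
      rw [← hrange, Set.mem_range]
      exact main_iff g hg z

/-- Continuous coding of a countable linear order into the rationals. -/
def eL (L : ℕ → ℕ → Bool) (n : ℕ) : ℚ :=
  (∑ k ∈ Finset.range (n+1), if L k n then ((3:ℚ)⁻¹) ^ k else 0) / 2

lemma term_nonneg (L : ℕ → ℕ → Bool) (k n : ℕ) :
    (0:ℚ) ≤ (if L k n then ((3:ℚ)⁻¹) ^ k else 0) := by
  split <;> positivity

lemma term_le (L : ℕ → ℕ → Bool) (k n : ℕ) :
    (if L k n then ((3:ℚ)⁻¹) ^ k else 0) ≤ ((3:ℚ)⁻¹) ^ k := by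
  split
  · exact le_refl _
  · positivity

lemma geom_bound (m n : ℕ) :
    ∑ k ∈ Finset.Ico m n, ((3:ℚ)⁻¹) ^ k ≤ ((3:ℚ)⁻¹) ^ m * (3/2) := by
  have h := geom_sum_Ico_le_of_lt_one (x := (3:ℚ)⁻¹) (by norm_num) (by norm_num) (m := m) (n := n)
  have e : ((3:ℚ)⁻¹) ^ m / (1 - 3⁻¹) = ((3:ℚ)⁻¹) ^ m * (3/2) := by
    norm_num
    ring
  rw [e] at h
  exact h

lemma eL_le_one (L : ℕ → ℕ → Bool) (n : ℕ) : eL L n ≤ 1 := by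
  have h1 : ∑ k ∈ Finset.range (n+1), (if L k n then ((3:ℚ)⁻¹) ^ k else 0)
      ≤ ∑ k ∈ Finset.range (n+1), ((3:ℚ)⁻¹) ^ k :=
    Finset.sum_le_sum (fun k _ => term_le L k n)
  have h2 : ∑ k ∈ Finset.range (n+1), ((3:ℚ)⁻¹) ^ k ≤ ((3:ℚ)⁻¹) ^ 0 * (3/2) := by
    rw [Finset.range_eq_Ico]
    exact geom_bound 0 (n+1)
  rw [eL]
  norm_num at h2 ⊢
  linarith

lemma eL_lt {L : ℕ → ℕ → Bool} (hL : IsLinearOrder ℕ (fun a b => L a b = true))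
    {a b : ℕ} (hab : L a b = true) (hne : a ≠ b) : eL L a < eL L b := by
  have htrans : ∀ p q r : ℕ, L p q = true → L q r = true → L p r = true :=
    hL.toIsPartialOrder.toIsPreorder.toIsTrans.trans
  have hrefl : ∀ p : ℕ, L p p = true := hL.toIsPartialOrder.toIsPreorder.toRefl.refl
  have hanti : ∀ p q : ℕ, L p q = true → L q p = true → p = q :=
    hL.toIsPartialOrder.toAntisymm.antisymm
  set c : ℕ → ℕ → ℚ := fun k n => if L k n then ((3:ℚ)⁻¹) ^ k else 0 with hc
  rcases lt_trichotomy a b with h | h | h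
  · -- a < b as naturals
    have h1 : ∑ k ∈ Finset.range (a+1), c k a ≤ ∑ k ∈ Finset.range (a+1), c k b := by
      apply Finset.sum_le_sum
      intro k _
      by_cases hk : L k a = true
      · have : L k b = true := htrans k a b hk hab
        simp [hc, hk, this]
      · simp only [hc]
        rw [if_neg hk]
        exact term_nonneg L k b
    have h2 : ∑ k ∈ Finset.range (a+1), c k b + ∑ k ∈ Finset.Ico (a+1) (b+1), c k b
        = ∑ k ∈ Finset.range (b+1), c k b :=
      Finset.sum_range_add_sum_Ico _ (by omega)
    have h3 : (0:ℚ) < ∑ k ∈ Finset.Ico (a+1) (b+1), c k b := by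
      apply Finset.sum_pos'
      · intro k _; exact term_nonneg L k b
      · refine ⟨b, Finset.mem_Ico.mpr ⟨by omega, by omega⟩, ?_⟩
        simp only [hc]
        rw [if_pos (hrefl b)]
        positivity
    rw [eL, eL]
    show (∑ k ∈ Finset.range (a+1), c k a)/2 < (∑ k ∈ Finset.range (b+1), c k b)/2
    linarith
  · exact absurd h hne
  · -- b < a as naturals
    have hba : ¬ (L b a = true) := by
      intro hba
      exact hne (hanti a b hab hba)
    have hterm : ∀ k, (0:ℚ) ≤ c k b - c k a := by
      intro k
      by_cases hk : L k a = true
      · have hkb : L k b = true := htrans k a b hk hab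
        simp [hc, hk, hkb]
      · have h3 : (0:ℚ) ≤ c k b := term_nonneg L k b
        have h2 : c k a = 0 := by simp [hc, hk]
        linarith
    have h1 : ((3:ℚ)⁻¹) ^ b ≤ ∑ k ∈ Finset.range (b+1), (c k b - c k a) := by
      have hs := Finset.single_le_sum (f := fun k => c k b - c k a)
        (fun k _ => hterm k) (Finset.self_mem_range_succ b)
      have e : c b b - c b a = ((3:ℚ)⁻¹) ^ b := by
        show (if L b b = true then ((3:ℚ)⁻¹)^b else 0)
            - (if L b a = true then ((3:ℚ)⁻¹)^b else 0) = ((3:ℚ)⁻¹) ^ b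
        rw [if_pos (hrefl b), if_neg hba]
        ring
      calc ((3:ℚ)⁻¹) ^ b = c b b - c b a := e.symm
        _ ≤ _ := hs
    have h2 : ∑ k ∈ Finset.range (b+1), (c k b - c k a)
        = ∑ k ∈ Finset.range (b+1), c k b - ∑ k ∈ Finset.range (b+1), c k a :=
      Finset.sum_sub_distrib _ _
    have h3 : ∑ k ∈ Finset.range (b+1), c k a + ∑ k ∈ Finset.Ico (b+1) (a+1), c k a
        = ∑ k ∈ Finset.range (a+1), c k a :=
      Finset.sum_range_add_sum_Ico _ (by omega)
    have h4 : ∑ k ∈ Finset.Ico (b+1) (a+1), c k a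
        ≤ ∑ k ∈ Finset.Ico (b+1) (a+1), ((3:ℚ)⁻¹) ^ k :=
      Finset.sum_le_sum (fun k _ => term_le L k a)
    have h5 : ∑ k ∈ Finset.Ico (b+1) (a+1), ((3:ℚ)⁻¹) ^ k ≤ ((3:ℚ)⁻¹) ^ (b+1) * (3/2) :=
      geom_bound (b+1) (a+1)
    have h6 : ((3:ℚ)⁻¹) ^ (b+1) * (3/2) = ((3:ℚ)⁻¹) ^ b / 2 := by
      rw [pow_succ]
      ring
    have h7 : (0:ℚ) < ((3:ℚ)⁻¹) ^ b := by positivity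
    rw [eL, eL]
    show (∑ k ∈ Finset.range (a+1), c k a)/2 < (∑ k ∈ Finset.range (b+1), c k b)/2
    linarith

lemma eL_inj {L : ℕ → ℕ → Bool} (hL : IsLinearOrder ℕ (fun a b => L a b = true)) :
    Function.Injective (eL L) := by
  intro a b hab
  by_contra hne
  rcases hL.toTotal.total a b with h | h
  · exact absurd hab (ne_of_lt (eL_lt hL h hne))
  · exact absurd hab.symm (ne_of_lt (eL_lt hL h (Ne.symm hne)))

/-- `eL` as a map into the discrete rationals. -/
def eLD (L : ℕ → ℕ → Bool) : ℕ → Qdisc := fun n => eL L n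

lemma eL_congr {L L' : ℕ → ℕ → Bool} (n : ℕ) (h : ∀ k, k < n+1 → L k n = L' k n) :
    eL L n = eL L' n := by
  rw [eL, eL]
  congr 1
  apply Finset.sum_congr rfl
  intro k hk
  rw [h k (Finset.mem_range.mp hk)]

lemma eLD_cont : Continuous (fun L : ℕ → ℕ → Bool => eLD L) := by
  apply continuous_pi
  intro n
  have key : (fun L : ℕ → ℕ → Bool => eLD L n) =
      (fun v : Fin (n+1) → Bool =>
        eLD (fun k _ => if h : k < n+1 then v ⟨k, h⟩ else false) n) ∘
      (fun L (k : Fin (n+1)) => L (k : ℕ) n) := by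
    funext L
    show eLD L n = eLD _ n
    unfold eLD
    apply eL_congr
    intro k hk
    simp [hk]
  rw [key]
  exact continuous_of_discreteTopology.comp
    (continuous_pi (fun k => (continuous_apply n).comp (continuous_apply (k : ℕ))))

lemma part3 : ∃ F : (ℕ → ℕ → Bool) → (ℕ → Qdisc) × (ℕ → Qdisc), Continuous F ∧
    ∀ L : ℕ → ℕ → Bool,
      IsLinearOrder ℕ (fun a b => L a b = true) →
      (¬ WellFounded (fun a b : ℕ => L a b = true ∧ a ≠ b) ↔
        geInj (F L).1 (F L).2) := by
  refine ⟨fun L => (topSeq (eLD L), eLD L), Continuous.prodMk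
      (topSeq_cont (fun i => (continuous_apply i).comp eLD_cont)) eLD_cont, ?_⟩
  intro L hL
  have htotal := hL.toTotal.total
  have hanti : ∀ p q : ℕ, L p q = true → L q p = true → p = q :=
    hL.toIsPartialOrder.toAntisymm.antisymm
  constructor
  · intro hWF
    haveI hirr : IsIrrefl ℕ (fun a b : ℕ => L a b = true ∧ a ≠ b) :=
      ⟨fun a h => h.2 rfl⟩
    haveI htr : IsTrans ℕ (fun a b : ℕ => L a b = true ∧ a ≠ b) := by
      constructor
      rintro p q r ⟨h1, hne1⟩ ⟨h2, hne2⟩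
      have htrans := hL.toIsPartialOrder.toIsPreorder.toIsTrans.trans
      refine ⟨htrans p q r h1 h2, fun he => ?_⟩
      subst he
      exact hne1 (hanti p q h1 h2)
    haveI : IsStrictOrder ℕ (fun a b : ℕ => L a b = true ∧ a ≠ b) := ⟨⟩
    rw [RelEmbedding.wellFounded_iff_isEmpty, not_isEmpty_iff] at hWF
    obtain ⟨E⟩ := hWF
    set x : ℕ → ℕ := fun n => E n with hx
    have hstep : ∀ n, L (x (n+1)) (x n) = true ∧ x (n+1) ≠ x n :=
      fun n => E.map_rel_iff.mpr (Nat.lt_succ_self n)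
    have hdesc : ∀ n, eL L (x (n+1)) < eL L (x n) :=
      fun n => eL_lt hL (hstep n).1 (hstep n).2
    have hxinj : Function.Injective x := by
      have hsa : StrictAnti (fun n => eL L (x n)) := strictAnti_nat_of_succ_lt hdesc
      intro aa bb he
      exact hsa.injective (show eL L (x aa) = eL L (x bb) by rw [he])
    exact geInj_of_chain (eLD L) x hxinj (eL_le_one L (x 0)) (fun n => le_of_lt (hdesc n))
  · intro h hWF
    obtain ⟨m, hm, h0, hs⟩ := chain_of_geInj (eLD L) h
    have hstrict : ∀ j, L (m (j+1)) (m j) = true ∧ m (j+1) ≠ m j := by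
      intro j
      have hne : m (j+1) ≠ m j := fun he => by have := hm he; omega
      have hlt : eL L (m (j+1)) < eL L (m j) :=
        lt_of_le_of_ne (hs j) (fun he => hne (eL_inj hL he))
      rcases htotal (m (j+1)) (m j) with hc | hc
      · exact ⟨hc, hne⟩
      · exact absurd (eL_lt hL hc (Ne.symm hne)) (by linarith)
    exact no_desc hWF m hstrict

lemma eval_cond_closed (n : ℕ) :
    IsClosed {q : ((ℕ → Qdisc) × (ℕ → Qdisc)) × (ℕ → ℕ) | q.1.2 (q.2 n) ≤ q.1.1 n} := by
  rw [← isOpen_compl_iff]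
  have he : {q : ((ℕ → Qdisc) × (ℕ → Qdisc)) × (ℕ → ℕ) | q.1.2 (q.2 n) ≤ q.1.1 n}ᶜ
      = ⋃ k : ℕ, ({q : ((ℕ → Qdisc) × (ℕ → Qdisc)) × (ℕ → ℕ) | q.2 n = k} ∩
          {q : ((ℕ → Qdisc) × (ℕ → Qdisc)) × (ℕ → ℕ) | ¬ q.1.2 k ≤ q.1.1 n}) := by
    ext q
    simp only [Set.mem_compl_iff, Set.mem_setOf_eq, Set.mem_iUnion, Set.mem_inter_iff]
    constructor
    · intro hq
      exact ⟨q.2 n, rfl, hq⟩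
    · rintro ⟨k, hk, hq⟩
      rwa [hk]
  rw [he]
  apply isOpen_iUnion
  intro k
  apply IsOpen.inter
  · have e2 : {q : ((ℕ → Qdisc) × (ℕ → Qdisc)) × (ℕ → ℕ) | q.2 n = k}
        = (fun q : ((ℕ → Qdisc) × (ℕ → Qdisc)) × (ℕ → ℕ) => q.2 n) ⁻¹' {k} := by
      ext q; simp
    rw [e2]
    exact (isOpen_discrete _).preimage ((continuous_apply n).comp continuous_snd)
  · have e3 : {q : ((ℕ → Qdisc) × (ℕ → Qdisc)) × (ℕ → ℕ) | ¬ q.1.2 k ≤ q.1.1 n}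
        = (fun q : ((ℕ → Qdisc) × (ℕ → Qdisc)) × (ℕ → ℕ) => (q.1.2 k, q.1.1 n)) ⁻¹'
          {x : Qdisc × Qdisc | ¬ x.1 ≤ x.2} := by
      ext q; simp
    rw [e3]
    exact (isOpen_discrete _).preimage
      (Continuous.prodMk ((continuous_apply k).comp (continuous_snd.comp continuous_fst))
        ((continuous_apply n).comp (continuous_fst.comp continuous_fst)))

lemma inj_closed :
    IsClosed {q : ((ℕ → Qdisc) × (ℕ → Qdisc)) × (ℕ → ℕ) | Function.Injective q.2} := by
  have he : {q : ((ℕ → Qdisc) × (ℕ → Qdisc)) × (ℕ → ℕ) | Function.Injective q.2}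
      = ⋂ m : ℕ, ⋂ n : ℕ,
        {q : ((ℕ → Qdisc) × (ℕ → Qdisc)) × (ℕ → ℕ) | q.2 m = q.2 n → m = n} := by
    ext q
    simp only [Set.mem_iInter, Set.mem_setOf_eq]
    exact ⟨fun h m n => fun hh => h hh, fun h a b hh => h a b hh⟩
  rw [he]
  apply isClosed_iInter
  intro m
  apply isClosed_iInter
  intro n
  by_cases hmn : m = n
  · have : {q : ((ℕ → Qdisc) × (ℕ → Qdisc)) × (ℕ → ℕ) | q.2 m = q.2 n → m = n} = Set.univ := by
      ext q; simp [hmn]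
    rw [this]
    exact isClosed_univ
  · have : {q : ((ℕ → Qdisc) × (ℕ → Qdisc)) × (ℕ → ℕ) | q.2 m = q.2 n → m = n}
        = (fun q : ((ℕ → Qdisc) × (ℕ → Qdisc)) × (ℕ → ℕ) => (q.2 m, q.2 n)) ⁻¹'
          {x : ℕ × ℕ | x.1 ≠ x.2} := by
      ext q
      simp only [Set.mem_setOf_eq, Set.mem_preimage, ne_eq]
      constructor
      · intro h hh
        exact hmn (h hh)
      · intro h hh
        exact absurd hh h
    rw [this]
    exact (isClosed_discrete _).preimage
      (Continuous.prodMk ((continuous_apply m).comp continuous_snd)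
        ((continuous_apply n).comp continuous_snd))

lemma part1 : MeasureTheory.AnalyticSet
    {p : (ℕ → Qdisc) × (ℕ → Qdisc) | geInj p.1 p.2} := by
  have himg : {p : (ℕ → Qdisc) × (ℕ → Qdisc) | geInj p.1 p.2}
      = Prod.fst '' {q : ((ℕ → Qdisc) × (ℕ → Qdisc)) × (ℕ → ℕ) |
          Function.Injective q.2 ∧ ∀ n, q.1.2 (q.2 n) ≤ q.1.1 n} := by
    ext p
    constructor
    · rintro ⟨f, hf, hle⟩
      exact ⟨(p, f), ⟨hf, hle⟩, rfl⟩
    · rintro ⟨⟨p', f⟩, ⟨hf, hle⟩, rfl⟩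
      exact ⟨f, hf, hle⟩
  rw [himg]
  apply MeasureTheory.AnalyticSet.image_of_continuous _ continuous_fst
  have hC : {q : ((ℕ → Qdisc) × (ℕ → Qdisc)) × (ℕ → ℕ) |
      Function.Injective q.2 ∧ ∀ n, q.1.2 (q.2 n) ≤ q.1.1 n}
      = {q : ((ℕ → Qdisc) × (ℕ → Qdisc)) × (ℕ → ℕ) | Function.Injective q.2} ∩
        ⋂ n : ℕ, {q : ((ℕ → Qdisc) × (ℕ → Qdisc)) × (ℕ → ℕ) | q.1.2 (q.2 n) ≤ q.1.1 n} := by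
    ext q
    simp only [Set.mem_inter_iff, Set.mem_iInter, Set.mem_setOf_eq]
  rw [hC]
  haveI : PolishSpace Qdisc := inferInstance
  exact (IsClosed.inter inj_closed (isClosed_iInter eval_cond_closed)).analyticSet

/-- The relation `≥^inj` on rational sequences is Σ¹₁-complete: it is analytic,
every analytic subset of Baire space continuously reduces to it, and in
particular there is a continuous map sending (a code of) a countable linear
order `L` to a pair of rational sequences `(α_L, β_L)` with `L` not a
well-order iff `α_L ≥^inj β_L`. -/
theorem stmt_14 :
    MeasureTheory.AnalyticSet {p : (ℕ → Qdisc) × (ℕ → Qdisc) | geInj p.1 p.2} ∧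
    (∀ B : Set (ℕ → ℕ), MeasureTheory.AnalyticSet B →
      ∃ F : (ℕ → ℕ) → (ℕ → Qdisc) × (ℕ → Qdisc), Continuous F ∧
        ∀ z, z ∈ B ↔ geInj (F z).1 (F z).2) ∧
    (∃ F : (ℕ → ℕ → Bool) → (ℕ → Qdisc) × (ℕ → Qdisc), Continuous F ∧
      ∀ L : ℕ → ℕ → Bool,
        IsLinearOrder ℕ (fun a b => L a b = true) →
        (¬ WellFounded (fun a b : ℕ => L a b = true ∧ a ≠ b) ↔
          geInj (F L).1 (F L).2)) :=
  ⟨part1, part2, part3⟩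
end

section
/- The map i sending a set X ⊆ D \ {0} to the ultrametric space U(X ∪ {0}) (with domain X ∪ {0} and distance d(r,r') = max{r,r'} for r ≠ r') is an order-embedding of (𝒫(D \ {0}), ⊆) into the quasi-order of isometric embeddability: X ⊆ Y if and only if U(X ∪ {0}) isometrically embeds into U(Y ∪ {0}). -/
/-- The map `X ↦ U(X ∪ {0})` is an order-embedding of `(𝒫(D \ {0}), ⊆)` into
isometric embeddability: `X ⊆ Y` iff `U(X ∪ {0})` isometrically embeds into
`U(Y ∪ {0})`. -/
theorem stmt_18 (D : Set ℝ) (h0 : (0:ℝ) ∈ D) (hnn : ∀ r ∈ D, 0 ≤ r)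
    (X Y : Set ℝ) (hX : X ⊆ D \ {0}) (hY : Y ⊆ D \ {0}) :
    X ⊆ Y ↔
      ∃ φ : (X ∪ {0} : Set ℝ) → (Y ∪ {0} : Set ℝ),
        Function.Injective φ ∧
        ∀ a b : (X ∪ {0} : Set ℝ),
          (if ((φ a : ℝ)) = ((φ b : ℝ)) then (0:ℝ) else max (φ a : ℝ) (φ b : ℝ)) =
          (if ((a : ℝ)) = ((b : ℝ)) then (0:ℝ) else max (a : ℝ) (b : ℝ)) := by
  constructor
  · intro hXY
    refine ⟨fun a => ⟨(a : ℝ), ?_⟩, ?_, ?_⟩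
    · rcases a.2 with h | h
      · exact Or.inl (hXY h)
      · exact Or.inr h
    · intro a b hab
      simp only [Subtype.mk.injEq] at hab
      exact Subtype.ext hab
    · intro a b; rfl
  · rintro ⟨φ, hinj, hd⟩ x hx
    have hx0 : x ≠ 0 := (hX hx).2
    have hxpos : 0 < x := lt_of_le_of_ne (hnn x (hX hx).1) (Ne.symm hx0)
    set a : (X ∪ {0} : Set ℝ) := ⟨x, Or.inl hx⟩
    set z : (X ∪ {0} : Set ℝ) := ⟨0, Or.inr rfl⟩
    have h := hd a z
    have haz : (a : ℝ) ≠ (z : ℝ) := hx0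
    rw [if_neg haz] at h
    have hmax : max (a : ℝ) (z : ℝ) = x := by
      simp [a, z, le_of_lt hxpos]
    have hne : (φ a : ℝ) ≠ (φ z : ℝ) := by
      intro he
      rw [if_pos he, hmax] at h
      exact hx0 h.symm
    rw [if_neg hne, hmax] at h
    -- h : max (φ a) (φ z) = x
    rcases max_cases (φ a : ℝ) (φ z : ℝ) with ⟨he, _⟩ | ⟨he, _⟩
    · have : (φ a : ℝ) = x := by rw [← he, h]
      rcases (φ a).2 with hm | hm
      · rwa [this] at hm
      · exact absurd (this ▸ hm) hx0
    · have : (φ z : ℝ) = x := by rw [← he, h]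
      rcases (φ z).2 with hm | hm
      · rwa [this] at hm
      · exact absurd (this ▸ hm) hx0
end

section
/- Let A ⊆ ℝ≥0 be a set of distances with 0 ∈ A. Every metric space realizing only distances in A is an ultrametric space if and only if A is well-spaced, i.e., for all r, r' ∈ A, r < r' implies 2r < r'. (For the forward direction: if r < r' ≤ 2r for some r, r' ∈ A, then the three-point space with two sides of length r and one of length r' is a metric space with distances in A that is not ultrametric; for the backward direction: in any metric space with distances in a well-spaced set, the strong triangle inequality holds.) -/
/-- Every metric space realizing only distances in `A` is ultrametric iff `A`
is well-spaced (`r < r'` implies `2r < r'` for `r, r' ∈ A`). -/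
theorem stmt_19 (A : Set ℝ) (h0 : (0:ℝ) ∈ A) (hnn : ∀ r ∈ A, 0 ≤ r) :
    (∀ (X : Type) (d : X → X → ℝ),
        (∀ a b : X, d a b = 0 ↔ a = b) →
        (∀ a b : X, d a b = d b a) →
        (∀ a b c : X, d a c ≤ d a b + d b c) →
        (∀ a b : X, d a b ∈ A) →
        ∀ a b c : X, d a b ≤ max (d a c) (d c b)) ↔
    (∀ r ∈ A, ∀ r' ∈ A, r < r' → 2 * r < r') := by
  constructor
  · intro H r hr r' hr' hlt
    by_contra hcon
    push_neg at hcon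
    have hrpos : 0 < r := by
      rcases lt_or_eq_of_le (hnn r hr) with h | h
      · exact h
      · exfalso; nlinarith [hnn r' hr']
    set d : Fin 3 → Fin 3 → ℝ := fun i j =>
      if i = j then 0 else if (i = 0 ∧ j = 1) ∨ (i = 1 ∧ j = 0) then r' else r with hd
    have key := H (Fin 3) d ?_ ?_ ?_ ?_ 0 1 2
    · simp only [hd] at key
      norm_num [Fin.ext_iff] at key
      nlinarith
    · intro a b
      fin_cases a <;> fin_cases b <;> simp [hd] <;> nlinarith
    · intro a b
      fin_cases a <;> fin_cases b <;> simp [hd]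
    · intro a b c
      fin_cases a <;> fin_cases b <;> fin_cases c <;> simp [hd] <;> nlinarith
    · intro a b
      fin_cases a <;> fin_cases b <;> simp [hd] <;> first | exact h0 | exact hr | exact hr'
  · intro H X d hzero hsymm htri hA a b c
    by_contra hcon
    push_neg at hcon
    rw [max_lt_iff] at hcon
    obtain ⟨h1, h2⟩ := hcon
    have hm : max (d a c) (d c b) ∈ A := by
      rcases max_cases (d a c) (d c b) with ⟨he, _⟩ | ⟨he, _⟩ <;> rw [he] <;> exact hA _ _
    have := H _ hm _ (hA a b) (by rw [max_lt_iff]; exact ⟨h1, h2⟩)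
    have := htri a c b
    have := le_max_left (d a c) (d c b)
    have := le_max_right (d a c) (d c b)
    nlinarith
end
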